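/- (Lemma 1(d) of the paper.) Let n ≥ 3 and treat the frame values A = (A_{iβ}) and the frame-derivative values B = (B_{iβγ}) as independent variables. At any pair (A, B) with A invertible which is semi-symmetric (i.e. Γ^α_{μν} − Γ^α_{νμ} = δ^α_μ ω_ν − δ^α_ν ω_μ, where Γ^α_{μν} := Σ_i λ_i^α B_{iμν}), the partial derivative of ω² with respect to the entry A_{iβ}, holding B fixed, equals (2/(1 − n)) [ λ_i^β ω² + (n − 2) (Σ_α λ_i^α ω_α) ω^β ]. -/

import Mathlib

open scoped BigOperators

/-- The inverse-frame components λ_i^α of a frame matrix `A` (so that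
Σ_i λ_i^α A_{iν} = δ^α_ν when `A` is invertible). -/
noncomputable def lamUp {n : ℕ} (A : Fin n → Fin n → ℝ) (i α : Fin n) : ℝ :=
  (Matrix.of A)⁻¹ α i

/-- The metric g_{μν} = Σ_i A_{iμ} A_{iν} built from the frame matrix `A`. -/
noncomputable def gOf {n : ℕ} (A : Fin n → Fin n → ℝ) : Matrix (Fin n) (Fin n) ℝ :=
  Matrix.of fun μ ν => ∑ i, A i μ * A i ν

/-- ω_μ(A,B) = (1/(1−n)) Σ_{i,α} λ_i^α (B_{iμα} − B_{iαμ}), with the frame values `A`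
and the frame-derivative values `B` treated as independent variables. -/
noncomputable def omegaOf {n : ℕ}
    (p : (Fin n → Fin n → ℝ) × (Fin n → Fin n → Fin n → ℝ)) (μ : Fin n) : ℝ :=
  (1 / (1 - (n : ℝ))) * ∑ i, ∑ α, lamUp p.1 i α * (p.2 i μ α - p.2 i α μ)

/-- ω^β(A,B) = Σ_α g^{βα} ω_α. -/
noncomputable def omegaUpOf {n : ℕ}
    (p : (Fin n → Fin n → ℝ) × (Fin n → Fin n → Fin n → ℝ)) (β : Fin n) : ℝ :=
  ∑ α, (gOf p.1)⁻¹ β α * omegaOf p α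

/-- ω²(A,B) = Σ_{μ,ν} g^{μν} ω_μ ω_ν. -/
noncomputable def omegaSqOf {n : ℕ}
    (p : (Fin n → Fin n → ℝ) × (Fin n → Fin n → Fin n → ℝ)) : ℝ :=
  ∑ μ, ∑ ν, (gOf p.1)⁻¹ μ ν * omegaOf p μ * omegaOf p ν

/-- The connection values Γ^α_{μν}(A,B) = Σ_i λ_i^α B_{iμν}. -/
noncomputable def GammaOf {n : ℕ}
    (p : (Fin n → Fin n → ℝ) × (Fin n → Fin n → Fin n → ℝ)) (α μ ν : Fin n) : ℝ :=
  ∑ i, lamUp p.1 i α * p.2 i μ ν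

section Aux
open Matrix
variable {n : ℕ}

abbrev PSp (n : ℕ) := (Fin n → Fin n → ℝ) × (Fin n → Fin n → Fin n → ℝ)

/-! ### Differentiability toolkit -/

theorem diffAt_prod' {E : Type*} [NormedAddCommGroup E] [NormedSpace ℝ E] {x : E}
    {ι : Type*} [DecidableEq ι] (s : Finset ι) (f : ι → E → ℝ)
    (h : ∀ i, DifferentiableAt ℝ (f i) x) :
    DifferentiableAt ℝ (fun y => ∏ i ∈ s, f i y) x := by
  classical
  induction s using Finset.induction with
  | empty => simp
  | insert _ _ hnotmem ih =>
    simp only [Finset.prod_insert hnotmem]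
    exact (h _).mul ih

theorem diffAt_det' {E : Type*} [NormedAddCommGroup E] [NormedSpace ℝ E] {x : E}
    {m : ℕ} (M : E → Matrix (Fin m) (Fin m) ℝ)
    (h : ∀ i j, DifferentiableAt ℝ (fun y => M y i j) x) :
    DifferentiableAt ℝ (fun y => (M y).det) x := by
  simp only [Matrix.det_apply']
  refine DifferentiableAt.fun_sum fun σ _ => ?_
  exact DifferentiableAt.const_mul (diffAt_prod' _ _ (fun i => h _ _)) _

theorem diffAt_inv_entry' {E : Type*} [NormedAddCommGroup E] [NormedSpace ℝ E] {x : E}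
    {m : ℕ} (M : E → Matrix (Fin m) (Fin m) ℝ)
    (h : ∀ i j, DifferentiableAt ℝ (fun y => M y i j) x)
    (hdet : (M x).det ≠ 0) (a b : Fin m) :
    DifferentiableAt ℝ (fun y => (M y)⁻¹ a b) x := by
  have hrw : ∀ y, (M y)⁻¹ a b = ((M y).det)⁻¹ * (M y).adjugate a b := by
    intro y
    rw [Matrix.inv_def, Matrix.smul_apply, Ring.inverse_eq_inv', smul_eq_mul]
  simp only [hrw]
  refine DifferentiableAt.mul (DifferentiableAt.inv (diffAt_det' M h) hdet) ?_
  simp only [Matrix.adjugate_apply]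
  refine diffAt_det' _ fun i j => ?_
  by_cases hij : i = b
  · simp [Matrix.updateRow_apply, hij]
  · simp only [Matrix.updateRow_apply, hij, if_false]
    exact h i j

theorem gOf_eq (A : Fin n → Fin n → ℝ) : gOf A = (Matrix.of A)ᵀ * Matrix.of A := by
  ext μ ν
  simp [gOf, Matrix.mul_apply, Matrix.transpose_apply]

theorem diffAt_lamUp (A : Fin n → Fin n → ℝ) (B : Fin n → Fin n → Fin n → ℝ)
    (hA : IsUnit (Matrix.of A).det) (j α : Fin n) :
    DifferentiableAt ℝ (fun p : PSp n => lamUp p.1 j α) (A, B) := by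
  show DifferentiableAt ℝ (fun p : PSp n => (Matrix.of p.1)⁻¹ α j) (A, B)
  refine diffAt_inv_entry' (fun p : PSp n => Matrix.of p.1) ?_ (isUnit_iff_ne_zero.mp hA) α j
  intro a b
  show DifferentiableAt ℝ (fun p : PSp n => p.1 a b) (A, B)
  fun_prop

theorem diffAt_omega (A : Fin n → Fin n → ℝ) (B : Fin n → Fin n → Fin n → ℝ)
    (hA : IsUnit (Matrix.of A).det) (μ : Fin n) :
    DifferentiableAt ℝ (fun p : PSp n => omegaOf p μ) (A, B) := by
  unfold omegaOf
  refine DifferentiableAt.const_mul ?_ _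
  refine DifferentiableAt.fun_sum fun j _ => DifferentiableAt.fun_sum fun α _ => ?_
  exact (diffAt_lamUp A B hA j α).mul (by fun_prop)

theorem diffAt_omegaSq (A : Fin n → Fin n → ℝ) (B : Fin n → Fin n → Fin n → ℝ)
    (hA : IsUnit (Matrix.of A).det) :
    DifferentiableAt ℝ (omegaSqOf (n := n)) (A, B) := by
  have hgdet : (gOf A).det ≠ 0 := by
    rw [gOf_eq, Matrix.det_mul, Matrix.det_transpose]
    exact mul_ne_zero (isUnit_iff_ne_zero.mp hA) (isUnit_iff_ne_zero.mp hA)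
  have hginv : ∀ μ ν, DifferentiableAt ℝ (fun p : PSp n => (gOf p.1)⁻¹ μ ν) (A, B) := by
    intro μ ν
    refine diffAt_inv_entry' (fun p : PSp n => gOf p.1) ?_ hgdet μ ν
    intro a b
    show DifferentiableAt ℝ (fun p : PSp n => ∑ k, p.1 k a * p.1 k b) (A, B)
    exact DifferentiableAt.fun_sum fun k _ => by fun_prop
  unfold omegaSqOf
  refine DifferentiableAt.fun_sum fun μ _ => DifferentiableAt.fun_sum fun ν _ => ?_
  exact ((hginv μ ν).mul (diffAt_omega A B hA μ)).mul (diffAt_omega A B hA ν)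

/-! ### Explicit curve computations -/

theorem lam_inv_sum (A : Fin n → Fin n → ℝ) (hA : IsUnit (Matrix.of A).det) (α ν : Fin n) :
    ∑ j, lamUp A j α * A j ν = if α = ν then 1 else 0 := by
  have h2 : ((Matrix.of A)⁻¹ * Matrix.of A) α ν = (1 : Matrix (Fin n) (Fin n) ℝ) α ν := by
    rw [Matrix.nonsing_inv_mul (Matrix.of A) hA]
  rw [Matrix.mul_apply, Matrix.one_apply] at h2
  simpa [lamUp] using h2

theorem lam_curve (A : Fin n → Fin n → ℝ) (hA : IsUnit (Matrix.of A).det) (i β : Fin n)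
    (t : ℝ) (ht : 1 + t * lamUp A i β ≠ 0) :
    (Matrix.of (A + t • fun i' β' => if i' = i ∧ β' = β then (1:ℝ) else 0))⁻¹
      = Matrix.of fun α j => lamUp A j α
          - (t / (1 + t * lamUp A i β)) * (lamUp A i α * lamUp A j β) := by
  have hct : (t / (1 + t * lamUp A i β)) * (1 + t * lamUp A i β) = t :=
    div_mul_cancel₀ t ht
  refine Matrix.inv_eq_left_inv ?_
  ext α ν
  rw [Matrix.mul_apply, Matrix.one_apply]
  simp only [Matrix.of_apply, Pi.add_apply, Pi.smul_apply, smul_eq_mul]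
  have hkey : ∀ γ : Fin n,
      (∑ j, lamUp A j γ * (A j ν + t * (if j = i ∧ ν = β then (1:ℝ) else 0)))
        = (if γ = ν then 1 else 0) + t * (if ν = β then lamUp A i γ else 0) := by
    intro γ
    have : ∀ j, lamUp A j γ * (A j ν + t * (if j = i ∧ ν = β then (1:ℝ) else 0))
        = lamUp A j γ * A j ν + t * (if j = i ∧ ν = β then lamUp A j γ else 0) := by
      intro j; by_cases h : j = i ∧ ν = β <;> simp [h] <;> ring
    simp only [this]
    rw [Finset.sum_add_distrib, lam_inv_sum A hA γ ν, ← Finset.mul_sum]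
    congr 1
    by_cases hνβ : ν = β
    · simp [hνβ]
    · simp [hνβ]
  have hexp : ∀ j, (lamUp A j α - (t / (1 + t * lamUp A i β)) * (lamUp A i α * lamUp A j β))
        * (A j ν + t * (if j = i ∧ ν = β then (1:ℝ) else 0))
      = lamUp A j α * (A j ν + t * (if j = i ∧ ν = β then (1:ℝ) else 0))
        - ((t / (1 + t * lamUp A i β)) * lamUp A i α)
            * (lamUp A j β * (A j ν + t * (if j = i ∧ ν = β then (1:ℝ) else 0))) := by
    intro j; ring
  simp only [hexp]
  rw [Finset.sum_sub_distrib, ← Finset.mul_sum, hkey α, hkey β]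
  by_cases hνβ : ν = β
  · subst hνβ
    simp only [eq_self_iff_true, if_true, ite_true, and_true]
    linear_combination (-(lamUp A i α)) * hct
  · simp [hνβ, Ne.symm hνβ]

theorem lam_curve' (A : Fin n → Fin n → ℝ) (hA : IsUnit (Matrix.of A).det) (i β : Fin n)
    (t : ℝ) (ht : 1 + t * lamUp A i β ≠ 0) (j α : Fin n) :
    lamUp (A + t • fun i' β' => if i' = i ∧ β' = β then (1:ℝ) else 0) j α
      = lamUp A j α - (t / (1 + t * lamUp A i β)) * (lamUp A i α * lamUp A j β) := by
  show (Matrix.of (A + t • fun i' β' => if i' = i ∧ β' = β then (1:ℝ) else 0))⁻¹ α j = _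
  rw [lam_curve A hA i β t ht]
  rfl

noncomputable def qq (A : Fin n → Fin n → ℝ) (B : Fin n → Fin n → Fin n → ℝ)
    (i β μ : Fin n) : ℝ :=
  (1 / (1 - (n : ℝ))) * ∑ α, lamUp A i α * (GammaOf (A, B) β μ α - GammaOf (A, B) β α μ)

theorem omega_curve (A : Fin n → Fin n → ℝ) (B : Fin n → Fin n → Fin n → ℝ)
    (hA : IsUnit (Matrix.of A).det) (i β : Fin n)
    (t : ℝ) (ht : 1 + t * lamUp A i β ≠ 0) (μ : Fin n) :
    omegaOf (A + t • fun i' β' => if i' = i ∧ β' = β then (1:ℝ) else 0, B) μ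
      = omegaOf (A, B) μ - (t / (1 + t * lamUp A i β)) * qq A B i β μ := by
  unfold omegaOf qq GammaOf
  simp only [lam_curve' A hA i β t ht]
  have expand : ∀ j α : Fin n,
      (lamUp A j α - (t / (1 + t * lamUp A i β)) * (lamUp A i α * lamUp A j β))
          * ((B j μ α - B j α μ))
        = lamUp A j α * (B j μ α - B j α μ)
          - (t / (1 + t * lamUp A i β)) * (lamUp A i α * (lamUp A j β * (B j μ α - B j α μ))) := by
    intro j α; ring
  simp only [expand]
  simp only [Finset.sum_sub_distrib, ← Finset.mul_sum]
  have hswap : (∑ j : Fin n, ∑ α : Fin n, lamUp A i α * (lamUp A j β * (B j μ α - B j α μ)))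
      = ∑ α : Fin n, lamUp A i α
          * ((∑ j, lamUp A j β * B j μ α) - ∑ j, lamUp A j β * B j α μ) := by
    rw [Finset.sum_comm]
    refine Finset.sum_congr rfl fun α _ => ?_
    rw [← Finset.sum_sub_distrib, Finset.mul_sum]
    refine Finset.sum_congr rfl fun j _ => by ring
  rw [hswap]
  ring

theorem ginv_entry (X : Fin n → Fin n → ℝ) (μ ν : Fin n) :
    (gOf X)⁻¹ μ ν = ∑ j, lamUp X j μ * lamUp X j ν := by
  rw [gOf_eq, Matrix.mul_inv_rev, ← Matrix.transpose_nonsing_inv, Matrix.mul_apply]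
  simp [Matrix.transpose_apply, lamUp]

theorem omegaSq_formula (X : Fin n → Fin n → ℝ) (B' : Fin n → Fin n → Fin n → ℝ) :
    omegaSqOf (X, B') = ∑ j, (∑ μ, lamUp X j μ * omegaOf (X, B') μ) ^ 2 := by
  unfold omegaSqOf
  simp only [ginv_entry]
  have h1 : ∀ μ ν : Fin n, (∑ j, lamUp X j μ * lamUp X j ν) * omegaOf (X, B') μ * omegaOf (X, B') ν
      = ∑ j, (lamUp X j μ * omegaOf (X, B') μ) * (lamUp X j ν * omegaOf (X, B') ν) := by
    intro μ ν
    rw [Finset.sum_mul, Finset.sum_mul]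
    exact Finset.sum_congr rfl fun j _ => by ring
  simp only [h1]
  have h2 : ∀ μ : Fin n, (∑ ν, ∑ j, (lamUp X j μ * omegaOf (X, B') μ) * (lamUp X j ν * omegaOf (X, B') ν))
      = ∑ j, ∑ ν, (lamUp X j μ * omegaOf (X, B') μ) * (lamUp X j ν * omegaOf (X, B') ν) :=
    fun μ => Finset.sum_comm
  simp only [h2]
  rw [Finset.sum_comm]
  refine Finset.sum_congr rfl fun j _ => ?_
  rw [pow_two, Finset.sum_mul_sum]

theorem omegaUp_formula (X : Fin n → Fin n → ℝ) (B' : Fin n → Fin n → Fin n → ℝ) (β : Fin n) :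
    omegaUpOf (X, B') β = ∑ j, lamUp X j β * (∑ μ, lamUp X j μ * omegaOf (X, B') μ) := by
  unfold omegaUpOf
  simp only [ginv_entry, Finset.sum_mul]
  rw [Finset.sum_comm]
  refine Finset.sum_congr rfl fun j _ => ?_
  rw [Finset.mul_sum]
  exact Finset.sum_congr rfl fun α _ => by ring

end Aux

/-- (Lemma 1(d) of the paper.) At a semi-symmetric pair (A,B) with A invertible,
∂ω²/∂A_{iβ} = (2/(1 − n)) [ λ_i^β ω² + (n − 2)(Σ_α λ_i^α ω_α) ω^β ]. -/
theorem sap_lemma1d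
    (n : ℕ) (hn : 3 ≤ n)
    (A : Fin n → Fin n → ℝ) (B : Fin n → Fin n → Fin n → ℝ)
    (hA : IsUnit (Matrix.of A).det)
    (hss : ∀ α μ ν, GammaOf (A, B) α μ ν - GammaOf (A, B) α ν μ
      = (if α = μ then omegaOf (A, B) ν else 0) - (if α = ν then omegaOf (A, B) μ else 0))
    (i β : Fin n) :
    fderiv ℝ (fun p : (Fin n → Fin n → ℝ) × (Fin n → Fin n → Fin n → ℝ) => omegaSqOf p)
        (A, B) (fun i' β' => if i' = i ∧ β' = β then (1:ℝ) else 0, 0)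
      = (2 / (1 - (n : ℝ))) *
          (lamUp A i β * omegaSqOf (A, B)
            + ((n : ℝ) - 2) * (∑ α, lamUp A i α * omegaOf (A, B) α) * omegaUpOf (A, B) β) := by
  classical
  have hn1 : (1 : ℝ) - (n : ℝ) ≠ 0 := by
    have : (3 : ℝ) ≤ (n : ℝ) := by exact_mod_cast hn
    nlinarith
  -- the direction
  set Ed : Fin n → Fin n → ℝ := fun i' β' => if i' = i ∧ β' = β then (1:ℝ) else 0 with hEd
  -- the curve
  have hcurve : HasDerivAt (fun t : ℝ => ((A + t • Ed, B) : PSp n))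
      ((Ed, 0) : (Fin n → Fin n → ℝ) × (Fin n → Fin n → Fin n → ℝ)) 0 := by
    refine HasDerivAt.prodMk ?_ (hasDerivAt_const 0 B)
    have := ((hasDerivAt_id (0:ℝ)).smul_const Ed).const_add A
    simpa using this
  have h0 : ((A + (0:ℝ) • Ed, B) : PSp n) = (A, B) := by simp
  have hF : HasFDerivAt (omegaSqOf (n := n)) (fderiv ℝ (omegaSqOf (n := n)) (A, B))
      ((A + (0:ℝ) • Ed, B) : PSp n) := by
    rw [h0]; exact (diffAt_omegaSq A B hA).hasFDerivAt
  have key : HasDerivAt (fun t : ℝ => omegaSqOf ((A + t • Ed, B) : PSp n))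
      (fderiv ℝ (omegaSqOf (n := n)) (A, B) (Ed, 0)) 0 :=
    by have := hF.comp_hasDerivAt 0 hcurve; exact this
  -- derivative of c
  have hc : HasDerivAt (fun t : ℝ => t / (1 + t * lamUp A i β)) 1 0 := by
    have h1 : HasDerivAt (fun t : ℝ => 1 + t * lamUp A i β) (lamUp A i β) 0 := by
      simpa using ((hasDerivAt_id (0:ℝ)).mul_const (lamUp A i β)).const_add 1
    have h2 := (hasDerivAt_id (0:ℝ)).fun_div h1 (by norm_num)
    simpa using h2
  -- the explicit 1-variable function
  have homg : ∀ μ : Fin n, HasDerivAt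
      (fun t : ℝ => omegaOf (A, B) μ - (t / (1 + t * lamUp A i β)) * qq A B i β μ)
      (-(1 * qq A B i β μ)) 0 := fun μ => (hc.mul_const _).const_sub _
  have hlamf : ∀ j μ : Fin n, HasDerivAt
      (fun t : ℝ => lamUp A j μ - (t / (1 + t * lamUp A i β)) * (lamUp A i μ * lamUp A j β))
      (-(1 * (lamUp A i μ * lamUp A j β))) 0 := fun j μ => (hc.mul_const _).const_sub _
  have hψ : HasDerivAt
      (fun t : ℝ => ∑ j, (∑ μ,
        ((lamUp A j μ - (t / (1 + t * lamUp A i β)) * (lamUp A i μ * lamUp A j β))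
          * (omegaOf (A, B) μ - (t / (1 + t * lamUp A i β)) * qq A B i β μ))) ^ 2)
      (∑ j, (((2:ℕ) : ℝ) * (∑ μ,
        ((lamUp A j μ - ((0:ℝ) / (1 + 0 * lamUp A i β)) * (lamUp A i μ * lamUp A j β))
          * (omegaOf (A, B) μ - ((0:ℝ) / (1 + 0 * lamUp A i β)) * qq A B i β μ))) ^ (2 - 1)
        * (∑ μ,
          (((-(1 * (lamUp A i μ * lamUp A j β)))
              * (omegaOf (A, B) μ - ((0:ℝ) / (1 + 0 * lamUp A i β)) * qq A B i β μ))
            + ((lamUp A j μ - ((0:ℝ) / (1 + 0 * lamUp A i β)) * (lamUp A i μ * lamUp A j β))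
              * (-(1 * qq A B i β μ))))))) 0 := by
    refine HasDerivAt.fun_sum fun j _ => ?_
    exact (HasDerivAt.fun_sum fun μ _ => (hlamf j μ).mul (homg μ)).pow 2
  -- eventual equality
  have hS : {t : ℝ | 1 + t * lamUp A i β ≠ 0} ∈ nhds (0:ℝ) := by
    have hcont : Continuous fun t : ℝ => 1 + t * lamUp A i β := by continuity
    have ho : IsOpen {t : ℝ | 1 + t * lamUp A i β ≠ 0} := by
      have : {t : ℝ | 1 + t * lamUp A i β ≠ 0}
          = (fun t : ℝ => 1 + t * lamUp A i β) ⁻¹' {x | x ≠ 0} := rfl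
      rw [this]
      exact isOpen_ne.preimage hcont
    exact ho.mem_nhds (by simp)
  have heq : (fun t : ℝ => ∑ j, (∑ μ,
        (lamUp A j μ - (t / (1 + t * lamUp A i β)) * (lamUp A i μ * lamUp A j β))
          * (omegaOf (A, B) μ - (t / (1 + t * lamUp A i β)) * qq A B i β μ)) ^ 2)
      =ᶠ[nhds (0:ℝ)] (fun t : ℝ => omegaSqOf ((A + t • Ed, B) : PSp n)) := by
    refine Filter.eventually_of_mem hS fun t ht => ?_
    dsimp only
    rw [omegaSq_formula]
    refine Finset.sum_congr rfl fun j _ => ?_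
    congr 1
    refine Finset.sum_congr rfl fun μ _ => ?_
    rw [hEd, lam_curve' A hA i β t ht, omega_curve A B hA i β t ht]
  have key2 := hψ.congr_of_eventuallyEq heq.symm
  have hval := key.unique key2
  rw [hval]
  -- now pure algebra
  have hq : ∀ μ, qq A B i β μ = (1 / (1 - (n : ℝ)))
      * ((if μ = β then (∑ α, lamUp A i α * omegaOf (A, B) α) else 0)
          - lamUp A i β * omegaOf (A, B) μ) := by
    intro μ
    unfold qq
    congr 1
    simp only [hss]
    by_cases hμβ : μ = β
    · subst hμβ
      simp [mul_sub, Finset.sum_sub_distrib, mul_ite, mul_zero, Finset.sum_ite_eq]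
    · rw [if_neg hμβ]
      have h5 : ∀ x, lamUp A i x * ((if β = μ then omegaOf (A, B) x else 0)
            - (if β = x then omegaOf (A, B) μ else 0))
          = -(if β = x then lamUp A i x * omegaOf (A, B) μ else 0) := by
        intro x
        rw [if_neg (fun h : β = μ => hμβ h.symm)]
        by_cases h : β = x <;> simp [h]
      simp only [h5, Finset.sum_neg_distrib, Finset.sum_ite_eq, Finset.mem_univ,
        if_true, ite_true, zero_sub]
  simp only [zero_div, zero_mul, sub_zero, one_mul, pow_one]
  have hSin : ∀ j, (∑ μ, ((-(lamUp A i μ * lamUp A j β)) * omegaOf (A, B) μ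
        + lamUp A j μ * (-(qq A B i β μ))))
      = -(lamUp A j β * (∑ α, lamUp A i α * omegaOf (A, B) α))
        - (1 / (1 - (n : ℝ))) * (lamUp A j β * (∑ α, lamUp A i α * omegaOf (A, B) α)
            - lamUp A i β * (∑ μ, lamUp A j μ * omegaOf (A, B) μ)) := by
    intro j
    simp only [hq]
    rw [Finset.sum_add_distrib]
    congr 1
    · have h3 : ∀ μ, (-(lamUp A i μ * lamUp A j β)) * omegaOf (A, B) μ
          = (-(lamUp A j β)) * (lamUp A i μ * omegaOf (A, B) μ) := fun μ => by ring
      simp only [h3]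
      rw [← Finset.mul_sum]
      ring
    · have h4 : ∀ μ, lamUp A j μ * (-((1 / (1 - (n : ℝ)))
            * ((if μ = β then (∑ α, lamUp A i α * omegaOf (A, B) α) else 0)
                - lamUp A i β * omegaOf (A, B) μ)))
          = (-(1 / (1 - (n : ℝ))))
            * ((if μ = β then lamUp A j μ * (∑ α, lamUp A i α * omegaOf (A, B) α) else 0)
                - lamUp A i β * (lamUp A j μ * omegaOf (A, B) μ)) := by
        intro μ
        by_cases h : μ = β
        · simp only [h, if_true, ite_true]; ring
        · simp only [h, if_false, ite_false]; ring
      simp only [h4]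
      rw [← Finset.mul_sum, Finset.sum_sub_distrib, ← Finset.mul_sum, Finset.sum_ite_eq']
      simp only [Finset.mem_univ, if_true, ite_true]
      ring
  simp only [hSin]
  rw [omegaSq_formula A B, omegaUp_formula A B β]
  have hper : ∀ j, ((2:ℕ) : ℝ) * (∑ μ, lamUp A j μ * omegaOf (A, B) μ)
        * (-(lamUp A j β * (∑ α, lamUp A i α * omegaOf (A, B) α))
          - (1 / (1 - (n : ℝ))) * (lamUp A j β * (∑ α, lamUp A i α * omegaOf (A, B) α)
              - lamUp A i β * (∑ μ, lamUp A j μ * omegaOf (A, B) μ)))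
      = ((-2 - 2 / (1 - (n : ℝ))) * (∑ α, lamUp A i α * omegaOf (A, B) α))
          * (lamUp A j β * (∑ μ, lamUp A j μ * omegaOf (A, B) μ))
        + ((2 / (1 - (n : ℝ))) * lamUp A i β)
          * ((∑ μ, lamUp A j μ * omegaOf (A, B) μ)) ^ 2 := by
    intro j
    push_cast
    field_simp
    ring
  simp only [show (2-1 : ℕ) = 1 from rfl, pow_one]
  simp only [hper]
  rw [Finset.sum_add_distrib, ← Finset.mul_sum, ← Finset.mul_sum]
  field_simp
  ring
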